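/- Let (M_i, ℬ_i, μ_i), i ∈ I, be measure spaces with μ_i(M_i) ≤ 1 and let 𝒟 be an ultrafilter on I. Let M = ∏_𝒟 M_i be the set-theoretic ultraproduct (the quotient of ∏_i M_i by (x_i) ∼ (y_i) iff { i : x_i = y_i } ∈ 𝒟), and for a family A_i ∈ ℬ_i let [A_i] = { [a_i] ∈ M : { i : a_i ∈ A_i } ∈ 𝒟 }. Then: (1) the collection of ultraboxes [A_i] is a Boolean algebra of subsets of M (containing ∅ and M and closed under finite unions, intersections, and complements); (2) the assignment μ([A_i]) = lim_𝒟 μ_i(A_i) is well defined (it depends only on the set [A_i], not on the representing family); and (3) μ is a measure on this Boolean algebra: μ(∅) = 0 and whenever (B_k)_{k∈ℕ} is a sequence of pairwise disjoint ultraboxes whose union is an ultrabox, μ(∪_k B_k) = Σ_k μ(B_k). -/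

import Mathlib

open MeasureTheory Filter Set
open scoped ENNReal Topology

/-- The equivalence relation of the set-theoretic ultraproduct: two families are identified
when they agree on a set in the ultrafilter `𝒟`. -/
def ultraSetoid {I : Type*} (𝒟 : Ultrafilter I) (M : I → Type*) : Setoid (∀ i, M i) where
  r x y := {i | x i = y i} ∈ 𝒟
  iseqv := by
    refine ⟨fun x => ?_, fun {x y} h => ?_, fun {x y z} hxy hyz => ?_⟩
    · exact Filter.mem_of_superset Filter.univ_mem fun i _ => rfl
    · exact Filter.mem_of_superset h fun i hi => (hi : _ = _).symm
    · exact Filter.mem_of_superset (Filter.inter_mem hxy hyz)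
        fun i hi => (hi.1 : _ = _).trans hi.2

/-- The set-theoretic ultraproduct `∏_𝒟 M_i`: the quotient of `∏_i M_i` by the relation
`(x_i) ∼ (y_i)` iff `{i : x_i = y_i} ∈ 𝒟`. -/
def UProd {I : Type*} (𝒟 : Ultrafilter I) (M : I → Type*) : Type _ :=
  Quotient (ultraSetoid 𝒟 M)

/-- The ultrabox `[A_i] = {[a_i] : {i : a_i ∈ A_i} ∈ 𝒟}` determined by a family of sets
`A_i ⊆ M_i`. -/
def ultrabox {I : Type*} (𝒟 : Ultrafilter I) (M : I → Type*) (A : ∀ i, Set (M i)) :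
    Set (UProd 𝒟 M) :=
  Quotient.mk (ultraSetoid 𝒟 M) '' {a | {i | a i ∈ A i} ∈ 𝒟}

/-- The collection of ultraboxes of families of measurable sets. -/
def ultraboxes {I : Type*} (𝒟 : Ultrafilter I) (M : I → Type*)
    [∀ i, MeasurableSpace (M i)] : Set (Set (UProd 𝒟 M)) :=
  {S | ∃ A : ∀ i, Set (M i), (∀ i, MeasurableSet (A i)) ∧ S = ultrabox 𝒟 M A}


section Helpers

variable {I : Type*} (𝒟 : Ultrafilter I) (M : I → Type*)

theorem mem_ultrabox {A : ∀ i, Set (M i)} (a : ∀ i, M i) :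
    Quotient.mk (ultraSetoid 𝒟 M) a ∈ ultrabox 𝒟 M A ↔ {i | a i ∈ A i} ∈ 𝒟 := by
  constructor
  · rintro ⟨b, hb, hba⟩
    have h : {i | b i = a i} ∈ 𝒟 := Quotient.exact hba
    refine Filter.mem_of_superset (Filter.inter_mem hb h) fun i hi => ?_
    have h2 : b i = a i := hi.2
    have h1 : b i ∈ A i := hi.1
    exact Set.mem_setOf_eq ▸ (h2 ▸ h1)
  · intro h; exact ⟨a, h, rfl⟩

theorem ultrabox_union (A B : ∀ i, Set (M i)) :
    ultrabox 𝒟 M (fun i => A i ∪ B i) = ultrabox 𝒟 M A ∪ ultrabox 𝒟 M B := by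
  ext x
  obtain ⟨a, rfl⟩ := Quotient.exists_rep x
  erw [Set.mem_union, mem_ultrabox, mem_ultrabox, mem_ultrabox]
  exact Ultrafilter.union_mem_iff

theorem ultrabox_inter (A B : ∀ i, Set (M i)) :
    ultrabox 𝒟 M (fun i => A i ∩ B i) = ultrabox 𝒟 M A ∩ ultrabox 𝒟 M B := by
  ext x
  obtain ⟨a, rfl⟩ := Quotient.exists_rep x
  erw [Set.mem_inter_iff, mem_ultrabox, mem_ultrabox, mem_ultrabox]
  exact Filter.inter_mem_iff

theorem ultrabox_compl (A : ∀ i, Set (M i)) :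
    ultrabox 𝒟 M (fun i => (A i)ᶜ) = (ultrabox 𝒟 M A)ᶜ := by
  ext x
  obtain ⟨a, rfl⟩ := Quotient.exists_rep x
  erw [Set.mem_compl_iff, mem_ultrabox, mem_ultrabox]
  exact Ultrafilter.compl_mem_iff_notMem

theorem ultrabox_mono {A B : ∀ i, Set (M i)} (h : ∀ i, A i ⊆ B i) :
    ultrabox 𝒟 M A ⊆ ultrabox 𝒟 M B := by
  intro x hx
  obtain ⟨a, rfl⟩ := Quotient.exists_rep x
  erw [mem_ultrabox] at hx ⊢
  exact Filter.mem_of_superset hx fun i hi => h i hi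

theorem ultrabox_empty : ultrabox 𝒟 M (fun _ => (∅ : Set (M _))) = ∅ := by
  ext x
  obtain ⟨a, rfl⟩ := Quotient.exists_rep x
  erw [mem_ultrabox]
  simp only [Set.mem_empty_iff_false, Set.setOf_false, iff_false]
  exact iff_of_false (Filter.empty_notMem _) (fun h => h)

theorem ultrabox_univ : ultrabox 𝒟 M (fun _ => (Set.univ : Set (M _))) = Set.univ := by
  ext x
  obtain ⟨a, rfl⟩ := Quotient.exists_rep x
  erw [mem_ultrabox]
  simp only [Set.mem_univ, Set.setOf_true, iff_true]
  exact iff_of_true Filter.univ_mem (Set.mem_univ _)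

theorem ultrabox_eq_empty_iff [∀ i, Nonempty (M i)] {A : ∀ i, Set (M i)} :
    ultrabox 𝒟 M A = ∅ ↔ {i | A i = ∅} ∈ 𝒟 := by
  constructor
  · intro h
    by_contra hc
    have h2 : {i | (A i).Nonempty} ∈ 𝒟 := by
      have hcompl := (Ultrafilter.compl_mem_iff_notMem (f := 𝒟)).2 hc
      refine Filter.mem_of_superset hcompl fun i hi => ?_
      exact Set.nonempty_iff_ne_empty.2 hi
    classical
    set a : ∀ i, M i := fun i =>
      if hi : (A i).Nonempty then hi.some else Classical.arbitrary (M i) with ha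
    have hmem : Quotient.mk (ultraSetoid 𝒟 M) a ∈ ultrabox 𝒟 M A := by
      rw [mem_ultrabox]
      refine Filter.mem_of_superset h2 fun i hi => ?_
      have hi' : (A i).Nonempty := hi
      show a i ∈ A i
      rw [ha]
      simp only [dif_pos hi']
      exact hi'.some_mem
    rw [h] at hmem
    exact hmem
  · intro h
    rw [Set.eq_empty_iff_forall_notMem]
    intro x hx
    obtain ⟨a, rfl⟩ := Quotient.exists_rep x
    erw [mem_ultrabox] at hx
    obtain ⟨i, hi1, hi2⟩ := Filter.nonempty_of_mem (Filter.inter_mem hx h)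
    have h2 : A i = ∅ := hi2
    have h1 : a i ∈ A i := hi1
    rw [h2] at h1
    exact h1

theorem tendsto_ulim (f : I → ℝ≥0∞) :
    Tendsto f (𝒟 : Filter I) (𝓝 (limUnder (𝒟 : Filter I) f)) := by
  have h : Tendsto f (𝒟 : Filter I) (𝓝 (Ultrafilter.map f 𝒟).lim) := by
    rw [Filter.Tendsto, ← Ultrafilter.coe_map]
    exact Ultrafilter.le_nhds_lim _
  rwa [h.limUnder_eq]

theorem ulim_congr {f g : I → ℝ≥0∞} (h : ∀ᶠ i in (𝒟 : Filter I), f i = g i) :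
    limUnder (𝒟 : Filter I) f = limUnder (𝒟 : Filter I) g :=
  ((tendsto_ulim 𝒟 g).congr' (Filter.EventuallyEq.symm h)).limUnder_eq

theorem ulim_mono {f g : I → ℝ≥0∞} (h : ∀ᶠ i in (𝒟 : Filter I), f i ≤ g i) :
    limUnder (𝒟 : Filter I) f ≤ limUnder (𝒟 : Filter I) g :=
  le_of_tendsto_of_tendsto (tendsto_ulim 𝒟 f) (tendsto_ulim 𝒟 g) h

theorem ulim_const (c : ℝ≥0∞) : limUnder (𝒟 : Filter I) (fun _ => c) = c :=
  tendsto_const_nhds.limUnder_eq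

theorem ulim_eventually_eq_zero {f : I → ℝ≥0∞} (h : ∀ᶠ i in (𝒟 : Filter I), f i = 0) :
    limUnder (𝒟 : Filter I) f = 0 := by
  rw [ulim_congr 𝒟 h]
  exact ulim_const 𝒟 0

theorem ulim_sum (f : ℕ → I → ℝ≥0∞) (s : Finset ℕ) :
    limUnder (𝒟 : Filter I) (fun i => ∑ k ∈ s, f k i) =
      ∑ k ∈ s, limUnder (𝒟 : Filter I) (f k) :=
  (tendsto_finset_sum s fun k _ => tendsto_ulim 𝒟 (f k)).limUnder_eq

theorem ulim_add (f g : I → ℝ≥0∞) :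
    limUnder (𝒟 : Filter I) (fun i => f i + g i) =
      limUnder (𝒟 : Filter I) f + limUnder (𝒟 : Filter I) g :=
  ((tendsto_ulim 𝒟 f).add (tendsto_ulim 𝒟 g)).limUnder_eq

end Helpers

/-- Lemma 3.3 (together with the surrounding discussion): given measure spaces
`(M_i, ℬ_i, μ_i)` with `μ_i(M_i) ≤ 1` and an ultrafilter `𝒟` on `I`, on the set-theoretic
ultraproduct `M = ∏_𝒟 M_i`:
(1) the ultraboxes form a Boolean algebra of subsets of `M`;
(2) `μ([A_i]) = lim_𝒟 μ_i(A_i)` is well defined (depends only on the ultrabox); and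
(3) `μ` is a measure on this Boolean algebra: it vanishes on `∅` and is countably additive
on disjoint sequences of ultraboxes whose union is again an ultrabox.
Here `limUnder (𝒟 : Filter I) (fun i => μ i (A i))` is the `𝒟`-limit of the family of
measures of the `A_i` (computed in `ℝ≥0∞`, where ultrafilter limits always exist, as the
first clause records). -/
theorem ultraproduct_premeasure
    {I : Type*} (𝒟 : Ultrafilter I) (M : I → Type*) [∀ i, Nonempty (M i)]
    [∀ i, MeasurableSpace (M i)] (μ : ∀ i, Measure (M i))
    (hμ : ∀ i, μ i Set.univ ≤ 1) :
    -- `𝒟`-limits of the measures exist (so `limUnder` below is the genuine limit)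
    (∀ A : ∀ i, Set (M i),
      Tendsto (fun i => μ i (A i)) (𝒟 : Filter I)
        (𝓝 (limUnder (𝒟 : Filter I) fun i => μ i (A i)))) ∧
    -- (1) the ultraboxes form a Boolean algebra of subsets of `M`
    (∅ ∈ ultraboxes 𝒟 M) ∧
    (Set.univ ∈ ultraboxes 𝒟 M) ∧
    (∀ S T, S ∈ ultraboxes 𝒟 M → T ∈ ultraboxes 𝒟 M → S ∪ T ∈ ultraboxes 𝒟 M) ∧
    (∀ S T, S ∈ ultraboxes 𝒟 M → T ∈ ultraboxes 𝒟 M → S ∩ T ∈ ultraboxes 𝒟 M) ∧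
    (∀ S, S ∈ ultraboxes 𝒟 M → Sᶜ ∈ ultraboxes 𝒟 M) ∧
    -- (2) `μ([A_i]) = lim_𝒟 μ_i(A_i)` is well defined
    (∀ A B : ∀ i, Set (M i), (∀ i, MeasurableSet (A i)) → (∀ i, MeasurableSet (B i)) →
      ultrabox 𝒟 M A = ultrabox 𝒟 M B →
      limUnder (𝒟 : Filter I) (fun i => μ i (A i)) =
        limUnder (𝒟 : Filter I) (fun i => μ i (B i))) ∧
    -- (3) `μ` is a measure on the Boolean algebra of ultraboxes: `μ ∅ = 0` ...
    (∀ A : ∀ i, Set (M i), (∀ i, MeasurableSet (A i)) → ultrabox 𝒟 M A = (∅ : Set (UProd 𝒟 M)) →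
      limUnder (𝒟 : Filter I) (fun i => μ i (A i)) = 0) ∧
    -- ... and countable additivity
    (∀ (A : ℕ → ∀ i, Set (M i)) (B : ∀ i, Set (M i)),
      (∀ k i, MeasurableSet (A k i)) → (∀ i, MeasurableSet (B i)) →
      (Pairwise fun k l => Disjoint (ultrabox 𝒟 M (A k)) (ultrabox 𝒟 M (A l))) →
      (⋃ k, ultrabox 𝒟 M (A k)) = ultrabox 𝒟 M B →
      limUnder (𝒟 : Filter I) (fun i => μ i (B i)) =
        ∑' k, limUnder (𝒟 : Filter I) (fun i => μ i (A k i))) := by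
  classical
  have hfin : ∀ (i : I) (s : Set (M i)), μ i s ≠ ∞ := fun i s =>
    (lt_of_le_of_lt ((measure_mono (Set.subset_univ s)).trans (hμ i)) ENNReal.one_lt_top).ne
  have hdiffbox : ∀ A B : ∀ i, Set (M i),
      ultrabox 𝒟 M (fun i => A i \ B i) = ultrabox 𝒟 M A \ ultrabox 𝒟 M B := by
    intro A B
    have h : (fun i => A i \ B i) = fun i => A i ∩ (B i)ᶜ := rfl
    rw [h, ultrabox_inter, ultrabox_compl, Set.diff_eq]
  have hsub : ∀ A B : ∀ i, Set (M i), ultrabox 𝒟 M A ⊆ ultrabox 𝒟 M B →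
      {i | A i ⊆ B i} ∈ 𝒟 := by
    intro A B h
    have h0 : ultrabox 𝒟 M (fun i => A i \ B i) = ∅ := by
      rw [hdiffbox]; exact Set.diff_eq_empty.2 h
    have h1 := (ultrabox_eq_empty_iff 𝒟 M).1 h0
    exact Filter.mem_of_superset h1 fun i hi => Set.diff_eq_empty.1 hi
  refine ⟨fun A => tendsto_ulim 𝒟 _, ?_, ?_, ?_, ?_, ?_, ?_, ?_, ?_⟩
  · exact ⟨fun _ => ∅, fun _ => MeasurableSet.empty, (ultrabox_empty 𝒟 M).symm⟩
  · exact ⟨fun _ => Set.univ, fun _ => MeasurableSet.univ, (ultrabox_univ 𝒟 M).symm⟩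
  · rintro S T ⟨A, hA, rfl⟩ ⟨B, hB, rfl⟩
    exact ⟨fun i => A i ∪ B i, fun i => (hA i).union (hB i), (ultrabox_union 𝒟 M A B).symm⟩
  · rintro S T ⟨A, hA, rfl⟩ ⟨B, hB, rfl⟩
    exact ⟨fun i => A i ∩ B i, fun i => (hA i).inter (hB i), (ultrabox_inter 𝒟 M A B).symm⟩
  · rintro S ⟨A, hA, rfl⟩
    exact ⟨fun i => (A i)ᶜ, fun i => (hA i).compl, (ultrabox_compl 𝒟 M A).symm⟩
  · -- well-definedness
    intro A B hA hB hAB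
    have h1 := hsub A B hAB.le
    have h2 := hsub B A hAB.ge
    refine ulim_congr 𝒟 ?_
    refine Filter.mem_of_superset (Filter.inter_mem h1 h2) fun i hi => ?_
    have : A i = B i := Set.Subset.antisymm hi.1 hi.2
    show μ i (A i) = μ i (B i)
    rw [this]
  · -- μ(∅) = 0
    intro A hA h
    have h1 := (ultrabox_eq_empty_iff 𝒟 M).1 h
    refine ulim_eventually_eq_zero 𝒟 ?_
    refine Filter.mem_of_superset h1 fun i hi => ?_
    have : A i = ∅ := hi
    show μ i (A i) = 0
    rw [this, measure_empty]
  · -- countable additivity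
    intro A B hA hB hdisjoint hUnion
    set C : ℕ → ∀ i, Set (M i) := fun n i => ⋃ k ∈ Finset.range n, A k i with hCdef
    have hCmeas : ∀ n i, MeasurableSet (C n i) := fun n i =>
      Finset.measurableSet_biUnion _ fun k _ => hA k i
    have hCbox : ∀ n, ultrabox 𝒟 M (C n) = ⋃ k ∈ Finset.range n, ultrabox 𝒟 M (A k) := by
      intro n
      induction n with
      | zero =>
        have h : C 0 = fun _ => (∅ : Set (M _)) := by
          funext i; simp [hCdef]
        rw [h, ultrabox_empty]
        simp
      | succ n ih =>
        have hstep : C (n + 1) = fun i => A n i ∪ C n i := by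
          funext i
          show ⋃ k ∈ Finset.range (n + 1), A k i = _
          rw [Finset.range_add_one, Finset.set_biUnion_insert]
        rw [hstep, ultrabox_union 𝒟 M (A n) (C n), ih, Finset.range_add_one,
          Finset.set_biUnion_insert]
    have hCmono : ∀ i {n n' : ℕ}, n ≤ n' → C n i ⊆ C n' i := by
      intro i n n' hnn x hx
      simp only [hCdef, Set.mem_iUnion, Finset.mem_range] at hx ⊢
      obtain ⟨k, hk, hxk⟩ := hx
      exact ⟨k, lt_of_lt_of_le hk hnn, hxk⟩
    have hCsubB : ∀ n, ultrabox 𝒟 M (C n) ⊆ ultrabox 𝒟 M B := by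
      intro n
      rw [hCbox]
      refine Set.iUnion₂_subset fun k _ => ?_
      rw [← hUnion]
      exact Set.subset_iUnion (fun k => ultrabox 𝒟 M (A k)) k
    have hdisj' : ∀ k l, k ≠ l → {i | A k i ∩ A l i = ∅} ∈ 𝒟 := by
      intro k l hkl
      have h : ultrabox 𝒟 M (fun i => A k i ∩ A l i) = ∅ := by
        rw [ultrabox_inter]
        exact Set.disjoint_iff_inter_eq_empty.1 (hdisjoint hkl)
      exact (ultrabox_eq_empty_iff 𝒟 M).1 h
    have hμC : ∀ n, ∀ᶠ i in (𝒟 : Filter I),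
        μ i (C n i) = ∑ k ∈ Finset.range n, μ i (A k i) := by
      intro n
      have hev : ∀ᶠ i in (𝒟 : Filter I), ∀ k ∈ Finset.range n, ∀ l ∈ Finset.range n,
          k ≠ l → A k i ∩ A l i = ∅ := by
        rw [Filter.eventually_all_finset]
        intro k _
        rw [Filter.eventually_all_finset]
        intro l _
        rcases eq_or_ne k l with rfl | hkl
        · exact Filter.Eventually.of_forall fun i h => absurd rfl h
        · exact Filter.mem_of_superset (hdisj' k l hkl) fun i hi _ => hi
      refine hev.mono fun i hi => ?_
      exact measure_biUnion_finset
        (fun k hk l hl hkl => Set.disjoint_iff_inter_eq_empty.2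
          (hi k (Finset.mem_coe.1 hk) l (Finset.mem_coe.1 hl) hkl))
        (fun k _ => hA k i)
    set m : ℕ → ℝ≥0∞ := fun k => limUnder (𝒟 : Filter I) fun i => μ i (A k i) with hm
    set mB : ℝ≥0∞ := limUnder (𝒟 : Filter I) fun i => μ i (B i) with hmB
    have hlimC : ∀ n, limUnder (𝒟 : Filter I) (fun i => μ i (C n i)) =
        ∑ k ∈ Finset.range n, m k := fun n =>
      (ulim_congr 𝒟 (hμC n)).trans (ulim_sum 𝒟 (fun k i => μ i (A k i)) (Finset.range n))
    have hlower : ∀ n, ∑ k ∈ Finset.range n, m k ≤ mB := by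
      intro n
      rw [← hlimC]
      refine ulim_mono 𝒟 ?_
      refine Filter.mem_of_superset (hsub (C n) B (hCsubB n)) fun i hi => ?_
      exact measure_mono hi
    set E : ℕ → ∀ i, Set (M i) := fun n i => B i \ C n i with hEdef
    have hEmeas : ∀ n i, MeasurableSet (E n i) := fun n i => (hB i).diff (hCmeas n i)
    have hEanti : ∀ i, Antitone fun n => E n i := fun i _ _ hnn =>
      Set.diff_subset_diff_right (hCmono i hnn)
    set mE : ℕ → ℝ≥0∞ := fun n => limUnder (𝒟 : Filter I) fun i => μ i (E n i) with hmE
    have hupper : ∀ n, mB ≤ mE n + ∑ k ∈ Finset.range n, m k := by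
      intro n
      rw [← hlimC n, hmB, hmE, ← ulim_add]
      refine ulim_mono 𝒟 (Filter.Eventually.of_forall fun i => ?_)
      calc μ i (B i) ≤ μ i (E n i ∪ C n i) := by
            refine measure_mono fun x hx => ?_
            by_cases h : x ∈ C n i
            · exact Or.inr h
            · exact Or.inl ⟨hx, h⟩
        _ ≤ μ i (E n i) + μ i (C n i) := measure_union_le _ _
    have hkey : ∀ ε : ℝ≥0∞, ε ≠ 0 → ε ≠ ∞ → ∃ n, mE n < ε := by
      intro ε hε0 hεtop
      by_contra hcon
      push_neg at hcon
      set δ : ℝ≥0∞ := ε / 2 with hδ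
      have hδ0 : 0 < δ := ENNReal.half_pos hε0
      have hδε : δ < ε := ENNReal.half_lt_self hε0 hεtop
      set T : ℕ → Set I := fun n => {i | δ < μ i (E n i)} with hTdef
      have hT : ∀ n, T n ∈ 𝒟 := fun n =>
        (tendsto_ulim 𝒟 fun i => μ i (E n i)).eventually_const_lt
          (lt_of_lt_of_le hδε (hcon n))
      have hG : ∀ n, (⋂ k ∈ Finset.range (n + 1), T k) ∈ 𝒟 := fun n =>
        (Filter.biInter_finset_mem _).2 fun k _ => hT k
      have hchoice : ∀ i, ∃ a : M i,
          ∀ n, i ∈ (⋂ k ∈ Finset.range (n + 1), T k) → a ∈ E n i := by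
        intro i
        by_cases hall : ∀ n, δ < μ i (E n i)
        · have hne : (⋂ n, E n i).Nonempty := by
            refine nonempty_of_measure_ne_zero (μ := μ i) ?_
            have hinter : μ i (⋂ n, E n i) = ⨅ n, μ i (E n i) :=
              Antitone.measure_iInter (hEanti i)
                (fun n => (hEmeas n i).nullMeasurableSet) ⟨0, hfin i _⟩
            rw [hinter]
            exact (lt_of_lt_of_le hδ0 (le_iInf fun n => (hall n).le)).ne'
          obtain ⟨a, ha⟩ := hne
          exact ⟨a, fun n _ => Set.mem_iInter.1 ha n⟩
        · push_neg at hall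
          have hex : ∃ n, ¬ δ < μ i (E n i) := by
            obtain ⟨n, hn⟩ := hall
            exact ⟨n, not_lt.2 hn⟩
          cases hNc : Nat.find hex with
          | zero =>
            refine ⟨Classical.arbitrary (M i), fun n hn => absurd ?_ (Nat.find_spec hex)⟩
            rw [hNc]
            exact Set.mem_iInter₂.1 hn 0 (Finset.mem_range.2 (Nat.succ_pos n))
          | succ n0 =>
            have hlt : δ < μ i (E n0 i) := by
              have h := Nat.find_min hex (m := n0) (by omega)
              exact not_not.1 h
            obtain ⟨a, ha⟩ := nonempty_of_measure_ne_zero (μ := μ i)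
              (s := E n0 i) (lt_of_le_of_lt (zero_le : 0 ≤ δ) hlt).ne'
            refine ⟨a, fun n hn => ?_⟩
            by_cases hle : n ≤ n0
            · exact hEanti i hle ha
            · exfalso
              have hTN : i ∈ T (Nat.find hex) :=
                Set.mem_iInter₂.1 hn (Nat.find hex) (Finset.mem_range.2 (by omega))
              exact (Nat.find_spec hex) hTN
      choose a ha using hchoice
      have hmemE : ∀ n, Quotient.mk (ultraSetoid 𝒟 M) a ∈ ultrabox 𝒟 M (E n) := by
        intro n
        rw [mem_ultrabox]
        exact Filter.mem_of_superset (hG n) fun i hi => ha i n hi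
      have h0 : Quotient.mk (ultraSetoid 𝒟 M) a ∈ ultrabox 𝒟 M B :=
        ultrabox_mono 𝒟 M (fun i => Set.diff_subset) (hmemE 0)
      rw [← hUnion] at h0
      obtain ⟨k0, hk0⟩ := Set.mem_iUnion.1 h0
      have hptwise : ∀ i, E (k0 + 1) i ∩ A k0 i = ∅ := by
        intro i
        rw [Set.eq_empty_iff_forall_notMem]
        rintro x ⟨hxE, hxA⟩
        refine hxE.2 ?_
        simp only [hCdef, Set.mem_iUnion, Finset.mem_range]
        exact ⟨k0, Nat.lt_succ_self k0, hxA⟩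
      have hdisj2 : ultrabox 𝒟 M (fun i => E (k0 + 1) i ∩ A k0 i) = ∅ := by
        have h : (fun i => E (k0 + 1) i ∩ A k0 i) = fun _ => (∅ : Set (M _)) := by
          funext i; exact hptwise i
        rw [h, ultrabox_empty]
      have hmem2 : Quotient.mk (ultraSetoid 𝒟 M) a ∈
          ultrabox 𝒟 M (fun i => E (k0 + 1) i ∩ A k0 i) := by
        rw [ultrabox_inter]
        exact ⟨hmemE (k0 + 1), hk0⟩
      rw [hdisj2] at hmem2
      exact hmem2
    have main : mB = ∑' k, m k := by
      refine le_antisymm ?_ ?_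
      · refine ENNReal.le_of_forall_pos_le_add fun ε hε _ => ?_
        obtain ⟨n, hn⟩ := hkey ε (by exact_mod_cast hε.ne') ENNReal.coe_ne_top
        calc mB ≤ mE n + ∑ k ∈ Finset.range n, m k := hupper n
          _ ≤ ε + ∑' k, m k := add_le_add hn.le (ENNReal.sum_le_tsum _)
          _ = ∑' k, m k + ε := add_comm _ _
      · rw [ENNReal.tsum_eq_iSup_nat]
        exact iSup_le hlower
    simpa only [hmB, hm] using main
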